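/- Two-point stationary states, decoupled case, part (b): assume D^{(12)} = 0 and fix i ∈ {1,2}. Then D^{(ii)} < 0 holds if and only if there exist a two-species distribution ρ and indices ι ≠ κ ∈ {1,2} such that simultaneously v^{(i)}_{ικ} > 0 and ρ^{(i)}(x_ι) = 0. -/

import Mathlib

open Finset

/-- The velocity `v^{(i)}_{ικ}` on the two-point space; `ρ k l` denotes the vertex *mass*
`ρ^{(k)}(x_l)`, so that `∑_λ (ΔK) ρ^{(k)}_λ μ_λ = ∑_l (ΔK) ρ k l`. -/
noncomputable def vel2 {d : ℕ} (x : Fin 2 → EuclideanSpace ℝ (Fin d))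
    (K : Fin 2 → Fin 2 → EuclideanSpace ℝ (Fin d) → EuclideanSpace ℝ (Fin d) → ℝ)
    (ρ : Fin 2 → Fin 2 → ℝ) (i ι κ : Fin 2) : ℝ :=
  ∑ k : Fin 2, ∑ l : Fin 2, (K i k (x ι) (x l) - K i k (x κ) (x l)) * ρ k l

/-- A two-species distribution on the two-point space, in terms of the vertex masses. -/
def IsDist2 (ρ : Fin 2 → Fin 2 → ℝ) : Prop :=
  (∀ i ι, 0 ≤ ρ i ι) ∧ ∀ i, ρ i 0 + ρ i 1 = 1

/-- Proposition 3.4 b) (decoupled case): if `D^{(12)} = 0` then `D^{(ii)} < 0` iff some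
distribution and some pair of distinct vertices satisfy simultaneously `v^{(i)}_{ικ} > 0`
and `ρ^{(i)}(x_ι) = 0`. -/
theorem two_point_stationary_decoupled_b
    (d : ℕ) (x : Fin 2 → EuclideanSpace ℝ (Fin d)) (hx : x 0 ≠ x 1)
    (μ : Fin 2 → ℝ) (hμ : ∀ ι, 0 < μ ι)
    (η12 : ℝ) (hη : 0 < η12)
    (K : Fin 2 → Fin 2 → EuclideanSpace ℝ (Fin d) → EuclideanSpace ℝ (Fin d) → ℝ)
    (hKsym : ∀ i k p q, K i k p q = K i k q p)
    (hK12 : ∀ p q, K 0 1 p q = K 1 0 p q)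
    (hKdiag : ∀ i k : Fin 2, ∀ p q : EuclideanSpace ℝ (Fin d), K i k p p = K i k q q)
    (D : Fin 2 → Fin 2 → ℝ)
    (hD : ∀ i k, D i k = K i k (x 0) (x 0) - K i k (x 0) (x 1))
    (hD12 : D 0 1 = 0)
    (i : Fin 2) :
    D i i < 0 ↔
      ∃ ρ, IsDist2 ρ ∧ ∃ ι κ : Fin 2, ι ≠ κ ∧ 0 < vel2 x K ρ i ι κ ∧ ρ i ι = 0 := by
  have h01 : K 0 1 (x 0) (x 0) = K 0 1 (x 0) (x 1) := by
    have := hD12; rw [hD] at this; linarith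
  have h10 : K 1 0 (x 0) (x 0) = K 1 0 (x 0) (x 1) := by
    rw [← hK12, ← hK12]; exact h01
  have hs : ∀ i k : Fin 2, K i k (x 1) (x 0) = K i k (x 0) (x 1) := fun i k => hKsym i k _ _
  have hd : ∀ i k : Fin 2, K i k (x 1) (x 1) = K i k (x 0) (x 0) := fun i k => hKdiag i k _ _
  have hvel : ∀ ρ : Fin 2 → Fin 2 → ℝ, ∀ ι κ : Fin 2, ι ≠ κ →
      vel2 x K ρ i ι κ = D i i * (ρ i ι - ρ i κ) := by
    intro ρ ι κ hικ
    clear hKsym hKdiag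
    fin_cases i <;> fin_cases ι <;> fin_cases κ <;>
      simp_all [vel2, Fin.sum_univ_two, hD, hs, hd, h01, h10] <;> ring
  constructor
  · intro hDi
    refine ⟨fun _ l => if l = 0 then 0 else 1, ⟨fun k l => by positivity, fun k => by norm_num⟩,
      0, 1, by decide, ?_, by norm_num⟩
    rw [hvel _ 0 1 (by decide)]
    norm_num
    linarith
  · rintro ⟨ρ, ⟨hnn, hsum⟩, ι, κ, hne, hv, hz⟩
    rw [hvel ρ ι κ hne, hz] at hv
    have hκ : ρ i κ = 1 := by
      have hsi := hsum i
      fin_cases ι <;> fin_cases κ <;> simp_all <;> linarith [hsi]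
    rw [hκ] at hv
    nlinarith
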